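/- Let P be the symmetric geometric-tail PMF on ℤ given by P(i) = p_{|i|} for |i| ≤ N and P(i) = p_N r^{|i|-N} for |i| > N, with all p_i > 0 and r ∈ (0,1). Then for α > 1 with r^{1-α} · r^α well-defined and an integer shift a with 1 ≤ a ≤ N, the series Σ_{i∈ℤ} P(i)^α P(i-a)^{1-α} converges if and only if r^{α} · r^{-(α-1)} summand tails converge, which holds always (since the tail terms behave like r^{|i|}), and its value equals (p_N r/(1-r))(r^{(1-α)a} + r^{α a}) + Σ_{j=-N}^{N-a} p_{|a+j|}^α p_{|j|}^{1-α} + p_N^α r^{α(a-N)} Σ_{j=N-a+1}^{N} r^{αj} p_{|j|}^{1-α} + p_N^{1-α} r^{-N(1-α)} Σ_{j=-a-N}^{-N-1} p_{|a+j|}^α r^{-j(1-α)}. -/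

import Mathlib

/-- Closed-form finite-dimensional expression for the Rényi-divergence objective of the
symmetric geometric-tail PMF family: the series `∑ᵢ P(i)^α P(i-a)^(1-α)` converges and its
value is given explicitly. -/
theorem geometric_tail_renyi_sum (N : ℕ) (hN : 1 ≤ N) (r : ℝ) (hr0 : 0 < r) (hr1 : r < 1)
    (α : ℝ) (hα : 1 < α) (a : ℕ) (ha1 : 1 ≤ a) (haN : a ≤ N)
    (p : ℕ → ℝ) (hp : ∀ j, 0 < p j)
    (P : ℤ → ℝ)
    (hP : ∀ i : ℤ, P i = if i.natAbs ≤ N then p i.natAbs else p N * r ^ (i.natAbs - N)) :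
    HasSum (fun i : ℤ => P i ^ α * P (i - (a : ℤ)) ^ (1 - α))
      ((p N * r / (1 - r)) * (r ^ ((1 - α) * (a : ℝ)) + r ^ (α * (a : ℝ)))
        + ∑ j ∈ Finset.Icc (-(N : ℤ)) ((N : ℤ) - (a : ℤ)),
            p ((a : ℤ) + j).natAbs ^ α * p j.natAbs ^ (1 - α)
        + p N ^ α * r ^ (α * ((a : ℝ) - (N : ℝ)))
            * ∑ j ∈ Finset.Icc ((N : ℤ) - (a : ℤ) + 1) (N : ℤ),
                r ^ (α * (j : ℝ)) * p j.natAbs ^ (1 - α)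
        + p N ^ (1 - α) * r ^ (-(N : ℝ) * (1 - α))
            * ∑ j ∈ Finset.Icc (-(a : ℤ) - (N : ℤ)) (-(N : ℤ) - 1),
                p ((a : ℤ) + j).natAbs ^ α * r ^ (-(j : ℝ) * (1 - α))) := by
  have key : ∀ (b e : ℝ), 0 < b → ∀ m : ℕ, (b * r ^ m) ^ e = b ^ e * r ^ (e * (m:ℝ)) := by
    intro b e hb m
    rw [Real.mul_rpow hb.le (pow_nonneg hr0.le m), ← Real.rpow_natCast r m,
      ← Real.rpow_mul hr0.le, mul_comm (m:ℝ)]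
  have hPlow : ∀ j : ℤ, j.natAbs ≤ N → P j = p j.natAbs := by
    intro j h; rw [hP, if_pos h]
  have hPhigh : ∀ j : ℤ, N < j.natAbs → P j = p N * r ^ (j.natAbs - N) := by
    intro j h; rw [hP, if_neg (by omega)]
  have hcollapse : ∀ x y : ℝ, p N ^ α * r ^ x * (p N ^ (1 - α) * r ^ y) = p N * r ^ (x + y) := by
    intro x y
    rw [mul_mul_mul_comm, ← Real.rpow_add (hp N), ← Real.rpow_add hr0]
    norm_num
  set g : ℤ → ℝ := fun j => P (j + a) ^ α * P j ^ (1 - α) with hg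
  rw [← (Equiv.addRight (a:ℤ)).hasSum_iff]
  have hge : (fun i : ℤ => P i ^ α * P (i - (a : ℤ)) ^ (1 - α)) ∘ (Equiv.addRight (a:ℤ)) = g := by
    funext j
    simp [hg, Equiv.coe_addRight, Function.comp]
  rw [hge]
  set s : Finset ℤ := Finset.Icc (-(a:ℤ) - N) N with hs
  set g1 : ℤ → ℝ := fun j => if j ∈ s then g j else 0 with hg1
  set g2 : ℤ → ℝ := fun j => if (N:ℤ) < j then g j else 0 with hg2
  set g3 : ℤ → ℝ := fun j => if j < -(a:ℤ) - N then g j else 0 with hg3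
  have hdecomp : g = fun j => g1 j + g2 j + g3 j := by
    funext j
    rcases lt_trichotomy j (-(a:ℤ) - N) with h | h | h
    · have h1 : j ∉ s := by simp only [hs, Finset.mem_Icc]; omega
      have h2 : ¬ ((N:ℤ) < j) := by omega
      simp [hg1, hg2, hg3, h, h1, h2]
    · have h1 : j ∈ s := by simp only [hs, Finset.mem_Icc]; omega
      have h2 : ¬ ((N:ℤ) < j) := by omega
      have h3 : ¬ (j < -(a:ℤ) - N) := by omega
      simp [hg1, hg2, hg3, h1, h2, h3]
    · rcases le_or_gt j N with h' | h'
      · have h1 : j ∈ s := by simp only [hs, Finset.mem_Icc]; omega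
        have h2 : ¬ ((N:ℤ) < j) := by omega
        have h3 : ¬ (j < -(a:ℤ) - N) := by omega
        simp [hg1, hg2, hg3, h1, h2, h3]
      · have h1 : j ∉ s := by simp only [hs, Finset.mem_Icc]; omega
        have h3 : ¬ (j < -(a:ℤ) - N) := by omega
        simp [hg1, hg2, hg3, h1, h', h3]
  have h1 : HasSum g1 (∑ j ∈ s, g j) := by
    have h0 : ∀ b ∉ s, g1 b = 0 := fun b hb => by simp [hg1, hb]
    have hh := hasSum_sum_of_ne_finset_zero (L := SummationFilter.unconditional ℤ) h0
    rwa [show ∑ b ∈ s, g1 b = ∑ j ∈ s, g j from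
      Finset.sum_congr rfl fun j hj => by simp [hg1, hj]] at hh
  have h2 : HasSum g2 (p N * r ^ (α * (a:ℝ)) * r * (1 - r)⁻¹) := by
    have hinj : Function.Injective (fun k : ℕ => (N:ℤ) + 1 + k) := by
      intro k1 k2 h; simpa using h
    have hrange : ∀ j : ℤ, j ∉ Set.range (fun k : ℕ => (N:ℤ) + 1 + k) → g2 j = 0 := by
      intro j hj
      show (if (N:ℤ) < j then g j else 0) = 0
      rw [if_neg]
      intro hlt
      exact hj ⟨(j - N - 1).toNat, show (N:ℤ) + 1 + ((j - N - 1).toNat : ℤ) = j by omega⟩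
    rw [← Function.Injective.hasSum_iff hinj hrange]
    have hcomp : (g2 ∘ fun k : ℕ => (N:ℤ) + 1 + k)
        = fun k : ℕ => p N * r ^ (α * (a:ℝ)) * r * r ^ k := by
      funext k
      have hc1 : (N:ℤ) + 1 + (k:ℤ) + (a:ℤ) = ((N + 1 + k + a : ℕ) : ℤ) := by push_cast; ring
      have hc2 : (N:ℤ) + 1 + (k:ℤ) = ((N + 1 + k : ℕ) : ℤ) := by push_cast; ring
      simp only [Function.comp, hg2, if_pos (by omega : (N:ℤ) < (N:ℤ) + 1 + (k:ℤ)), hg]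
      rw [hc1, hc2, hPhigh _ (by simp; omega), hPhigh _ (by simp; omega)]
      simp only [Int.natAbs_natCast]
      rw [show N + 1 + k + a - N = a + k + 1 by omega, show N + 1 + k - N = k + 1 by omega,
        key _ _ (hp N), key _ _ (hp N), hcollapse]
      have hexp : α * ((a + k + 1 : ℕ) : ℝ) + (1 - α) * ((k + 1 : ℕ) : ℝ)
          = α * (a:ℝ) + 1 + (k:ℝ) := by push_cast; ring
      rw [hexp, Real.rpow_add hr0, Real.rpow_add hr0, Real.rpow_one, Real.rpow_natCast]
      ring
    rw [hcomp]
    exact (hasSum_geometric_of_lt_one hr0.le hr1).mul_left _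
  have h3 : HasSum g3 (p N * r ^ ((1 - α) * (a:ℝ)) * r * (1 - r)⁻¹) := by
    have hinj : Function.Injective (fun k : ℕ => -(a:ℤ) - N - 1 - k) := by
      intro k1 k2 h; simp only at h; omega
    have hrange : ∀ j : ℤ, j ∉ Set.range (fun k : ℕ => -(a:ℤ) - N - 1 - k) → g3 j = 0 := by
      intro j hj
      show (if j < -(a:ℤ) - N then g j else 0) = 0
      rw [if_neg]
      intro hlt
      exact hj ⟨(-(a:ℤ) - N - 1 - j).toNat, show -(a:ℤ) - N - 1 - (((-(a:ℤ) - N - 1 - j).toNat : ℕ) : ℤ) = j by omega⟩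
    rw [← Function.Injective.hasSum_iff hinj hrange]
    have hcomp : (g3 ∘ fun k : ℕ => -(a:ℤ) - N - 1 - k)
        = fun k : ℕ => p N * r ^ ((1 - α) * (a:ℝ)) * r * r ^ k := by
      funext k
      simp only [Function.comp, hg3,
        if_pos (by omega : -(a:ℤ) - N - 1 - (k:ℤ) < -(a:ℤ) - N), hg]
      have hn1 : (-(a:ℤ) - N - 1 - k + a).natAbs = N + 1 + k := by omega
      have hn2 : (-(a:ℤ) - N - 1 - k).natAbs = a + N + 1 + k := by omega
      rw [hPhigh _ (by omega), hPhigh _ (by omega), hn1, hn2,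
        show N + 1 + k - N = k + 1 by omega, show a + N + 1 + k - N = a + k + 1 by omega,
        key _ _ (hp N), key _ _ (hp N), hcollapse]
      have hexp : α * ((k + 1 : ℕ) : ℝ) + (1 - α) * ((a + k + 1 : ℕ) : ℝ)
          = (1 - α) * (a:ℝ) + 1 + (k:ℝ) := by push_cast; ring
      rw [hexp, Real.rpow_add hr0, Real.rpow_add hr0, Real.rpow_one, Real.rpow_natCast]
      ring
    rw [hcomp]
    exact (hasSum_geometric_of_lt_one hr0.le hr1).mul_left _
  have htot := (h1.add h2).add h3
  rw [hdecomp]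
  convert htot using 1
  -- value identity
  have hsum : ∑ j ∈ s, g j
      = (∑ j ∈ Finset.Icc (-(N : ℤ)) ((N : ℤ) - (a : ℤ)),
            p ((a : ℤ) + j).natAbs ^ α * p j.natAbs ^ (1 - α))
        + p N ^ α * r ^ (α * ((a : ℝ) - (N : ℝ)))
            * (∑ j ∈ Finset.Icc ((N : ℤ) - (a : ℤ) + 1) (N : ℤ),
                r ^ (α * (j : ℝ)) * p j.natAbs ^ (1 - α))
        + p N ^ (1 - α) * r ^ (-(N : ℝ) * (1 - α))
            * (∑ j ∈ Finset.Icc (-(a : ℤ) - (N : ℤ)) (-(N : ℤ) - 1),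
                p ((a : ℤ) + j).natAbs ^ α * r ^ (-(j : ℝ) * (1 - α))) := by
    have hU : s = Finset.Icc (-(a:ℤ) - N) (-(N:ℤ) - 1)
        ∪ (Finset.Icc (-(N:ℤ)) ((N:ℤ) - a) ∪ Finset.Icc ((N:ℤ) - a + 1) (N:ℤ)) := by
      ext j
      simp only [hs, Finset.mem_Icc, Finset.mem_union]
      omega
    have hd2 : Disjoint (Finset.Icc (-(N:ℤ)) ((N:ℤ) - a)) (Finset.Icc ((N:ℤ) - a + 1) (N:ℤ)) := by
      rw [Finset.disjoint_left]
      intro x hx hx'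
      simp only [Finset.mem_Icc] at hx hx'
      omega
    have hd1 : Disjoint (Finset.Icc (-(a:ℤ) - N) (-(N:ℤ) - 1))
        (Finset.Icc (-(N:ℤ)) ((N:ℤ) - a) ∪ Finset.Icc ((N:ℤ) - a + 1) (N:ℤ)) := by
      rw [Finset.disjoint_left]
      intro x hx hx'
      simp only [Finset.mem_Icc, Finset.mem_union] at hx hx'
      omega
    rw [hU, Finset.sum_union hd1, Finset.sum_union hd2]
    have hA : ∑ j ∈ Finset.Icc (-(a:ℤ) - N) (-(N:ℤ) - 1), g j
        = p N ^ (1 - α) * r ^ (-(N : ℝ) * (1 - α))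
            * (∑ j ∈ Finset.Icc (-(a:ℤ) - (N:ℤ)) (-(N:ℤ) - 1),
                p ((a : ℤ) + j).natAbs ^ α * r ^ (-(j : ℝ) * (1 - α))) := by
      rw [Finset.mul_sum]
      refine Finset.sum_congr rfl fun j hj => ?_
      simp only [Finset.mem_Icc] at hj
      obtain ⟨n, rfl⟩ : ∃ n : ℕ, j = -(n:ℤ) :=
        ⟨(-j).toNat, by omega⟩
      have hb1 : N + 1 ≤ n := by omega
      have hb2 : n ≤ a + N := by omega
      have hna : (-(n:ℤ)).natAbs = n := by omega
      show P (-(n:ℤ) + a) ^ α * P (-(n:ℤ)) ^ (1 - α) = _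
      rw [hPlow _ (by omega), hPhigh _ (by omega), hna, key _ _ (hp N)]
      have hc : ((n - N : ℕ) : ℝ) = (n : ℝ) - (N : ℝ) := by
        push_cast [Nat.cast_sub (by omega : N ≤ n)]
        ring
      rw [hc, show (1 - α) * ((n:ℝ) - N) = -(N:ℝ) * (1 - α) + (n:ℝ) * (1 - α) by ring,
        Real.rpow_add hr0]
      have hab : (-(n:ℤ) + (a:ℤ)).natAbs = ((a:ℤ) + -(n:ℤ)).natAbs := by omega
      rw [hab, show -((-(n:ℤ) : ℤ) : ℝ) * (1 - α) = (n:ℝ) * (1 - α) by push_cast; ring]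
      ring
    have hB : ∑ j ∈ Finset.Icc (-(N:ℤ)) ((N:ℤ) - a), g j
        = ∑ j ∈ Finset.Icc (-(N : ℤ)) ((N : ℤ) - (a : ℤ)),
            p ((a : ℤ) + j).natAbs ^ α * p j.natAbs ^ (1 - α) := by
      refine Finset.sum_congr rfl fun j hj => ?_
      simp only [Finset.mem_Icc] at hj
      show P (j + a) ^ α * P j ^ (1 - α) = _
      rw [hPlow _ (by omega), hPlow _ (by omega),
        show (j + (a:ℤ)).natAbs = ((a:ℤ) + j).natAbs by omega]
    have hC : ∑ j ∈ Finset.Icc ((N:ℤ) - a + 1) (N:ℤ), g j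
        = p N ^ α * r ^ (α * ((a : ℝ) - (N : ℝ)))
            * (∑ j ∈ Finset.Icc ((N : ℤ) - (a : ℤ) + 1) (N : ℤ),
                r ^ (α * (j : ℝ)) * p j.natAbs ^ (1 - α)) := by
      rw [Finset.mul_sum]
      refine Finset.sum_congr rfl fun j hj => ?_
      simp only [Finset.mem_Icc] at hj
      obtain ⟨n, rfl⟩ : ∃ n : ℕ, j = (n:ℤ) := ⟨j.toNat, by omega⟩
      have hb1 : N - a + 1 ≤ n := by omega
      have hb2 : n ≤ N := by omega
      have hcast : (n:ℤ) + (a:ℤ) = ((n + a : ℕ) : ℤ) := by push_cast; ring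
      show P ((n:ℤ) + a) ^ α * P ((n:ℤ)) ^ (1 - α) = _
      rw [hcast, hPhigh _ (by simp; omega), hPlow _ (by simp; omega)]
      simp only [Int.natAbs_natCast]
      rw [key _ _ (hp N)]
      have hc : ((n + a - N : ℕ) : ℝ) = (n : ℝ) + (a : ℝ) - (N : ℝ) := by
        push_cast [Nat.cast_sub (by omega : N ≤ n + a)]
        ring
      rw [hc, show α * ((n:ℝ) + a - N) = α * ((a:ℝ) - N) + α * (n:ℝ) by ring,
        Real.rpow_add hr0, show α * (((n:ℕ):ℤ):ℝ) = α * (n:ℝ) by push_cast; ring]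
      ring
    rw [hA, hB, hC]
    ring
  rw [hsum, div_eq_mul_inv]
  ring
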